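/- arXiv:2007.15178 — 7 statements merged into one kernel-verified Lean document; each statement's English description precedes it below -/
import Mathlib

section
/- Let Λ be a torsion-free group in which the centralizer of every nontrivial element is cyclic. Let Γ be a group and K₁, K₂ ⊴ Γ normal subgroups that commute elementwise ([K₁, K₂] = 1). Then for any homomorphism φ: Γ → Λ whose image is not cyclic, φ is trivial on K₁ or trivial on K₂. -/
private lemma aux_comm_of_cyclic {Λ : Type*} [Group Λ] {H : Subgroup Λ}
    (h : IsCyclic H) {x y : Λ} (hx : x ∈ H) (hy : y ∈ H) : Commute x y := by
  letI := h
  letI := IsCyclic.commGroup (α := H)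
  have h2 := mul_comm (⟨x, hx⟩ : H) ⟨y, hy⟩
  exact Subtype.ext_iff.mp h2

/-- If two nontrivial elements commute, their centralizers coincide. -/
private lemma aux_centralizer_eq {Λ : Type*} [Group Λ]
    (hΛ : ∀ l : Λ, l ≠ 1 → IsCyclic (Subgroup.centralizer {l}))
    {a b : Λ} (ha : a ≠ 1) (hb : b ≠ 1) (hab : Commute a b) :
    Subgroup.centralizer {a} = Subgroup.centralizer {b} := by
  have key : ∀ u v : Λ, (hu : u ≠ 1) → Commute u v →
      Subgroup.centralizer {u} ≤ Subgroup.centralizer {v} := by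
    intro u v hu huv
    intro x hx
    have hvmem : v ∈ Subgroup.centralizer {u} :=
      Subgroup.mem_centralizer_singleton_iff.mpr huv.symm.eq
    have : Commute x v := aux_comm_of_cyclic (hΛ u hu) hx hvmem
    exact Subgroup.mem_centralizer_singleton_iff.mpr this.eq
  exact le_antisymm (key a b ha hab) (key b a hb hab.symm)

/-- If a conjugate of `a` commutes with `a`, then `g` commutes with `a`. -/
private lemma aux_norm {Λ : Type*} [Group Λ] (htf : ∀ g : Λ, g ≠ 1 → ¬IsOfFinOrder g)
    (hΛ : ∀ l : Λ, l ≠ 1 → IsCyclic (Subgroup.centralizer {l}))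
    {g a : Λ} (ha : a ≠ 1) (h : Commute (g * a * g⁻¹) a) : Commute g a := by
  obtain ⟨⟨c, hcC⟩, hc⟩ := hΛ a ha
  have haC : a ∈ Subgroup.centralizer {a} :=
    Subgroup.mem_centralizer_singleton_iff.mpr rfl
  -- a = c ^ j
  obtain ⟨j, hj⟩ := hc ⟨a, haC⟩
  have hja : c ^ j = a := Subtype.ext_iff.mp hj
  have hcne : c ≠ 1 := by
    rintro rfl
    rw [one_zpow] at hja
    exact ha hja.symm
  have hconj_ne : g * a * g⁻¹ ≠ 1 := by
    intro h1; exact ha (by simpa using (conj_eq_one_iff (a := g) (b := a)).mp h1)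
  have hconj_ne' : g⁻¹ * a * g ≠ 1 := by
    intro h1
    apply ha
    have := (conj_eq_one_iff (a := g⁻¹) (b := a)).mp (by simpa using h1)
    exact this
  -- centralizer of conjugates equal centralizer of a
  have hCgag : Subgroup.centralizer {g * a * g⁻¹} = Subgroup.centralizer {a} :=
    aux_centralizer_eq hΛ hconj_ne ha h
  have hcomm_inv : Commute (g⁻¹ * a * g) a := by
    have := h.symm
    have h2 : Commute (g⁻¹ * a * g) (g⁻¹ * (g * a * g⁻¹) * g) := by
      simpa [mul_assoc] using (this.conj g⁻¹ : _)
    have h3 : g⁻¹ * (g * a * g⁻¹) * g = a := by group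
    rw [h3] at h2
    exact h2
  have hCg'ag : Subgroup.centralizer {g⁻¹ * a * g} = Subgroup.centralizer {a} :=
    aux_centralizer_eq hΛ hconj_ne' ha hcomm_inv
  -- g * c * g⁻¹ ∈ centralizer {a}
  have hgcg : g * c * g⁻¹ ∈ Subgroup.centralizer {a} := by
    have hc1 : c ∈ Subgroup.centralizer {g⁻¹ * a * g} := hCg'ag ▸ hcC
    have hc2 : Commute c (g⁻¹ * a * g) := Subgroup.mem_centralizer_singleton_iff.mp hc1
    have hc3 : Commute (g * c * g⁻¹) (g * (g⁻¹ * a * g) * g⁻¹) := by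
      simpa [mul_assoc] using (hc2.conj g : _)
    have h3 : g * (g⁻¹ * a * g) * g⁻¹ = a := by group
    rw [h3] at hc3
    exact Subgroup.mem_centralizer_singleton_iff.mpr hc3.eq
  have hg'cg : g⁻¹ * c * g ∈ Subgroup.centralizer {a} := by
    have hc1 : c ∈ Subgroup.centralizer {g * a * g⁻¹} := hCgag ▸ hcC
    have hc2 : Commute c (g * a * g⁻¹) := Subgroup.mem_centralizer_singleton_iff.mp hc1
    have hc3 : Commute (g⁻¹ * c * g) (g⁻¹ * (g * a * g⁻¹) * g) := by
      simpa [mul_assoc] using (hc2.conj g⁻¹ : _)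
    have h3 : g⁻¹ * (g * a * g⁻¹) * g = a := by group
    rw [h3] at hc3
    exact Subgroup.mem_centralizer_singleton_iff.mpr hc3.eq
  obtain ⟨n, hn⟩ := hc ⟨g * c * g⁻¹, hgcg⟩
  have hn' : c ^ n = g * c * g⁻¹ := Subtype.ext_iff.mp hn
  obtain ⟨m, hm⟩ := hc ⟨g⁻¹ * c * g, hg'cg⟩
  have hm' : c ^ m = g⁻¹ * c * g := Subtype.ext_iff.mp hm
  have hinj : Function.Injective fun k : ℤ => c ^ k :=
    injective_zpow_iff_not_isOfFinOrder.mpr (htf c hcne)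
  have hnm : c ^ (m * n) = c ^ (1 : ℤ) := by
    calc c ^ (m * n) = (c ^ m) ^ n := by rw [zpow_mul]
      _ = (g⁻¹ * c * g) ^ n := by rw [hm']
      _ = g⁻¹ * c ^ n * g := by
          simpa using (conj_zpow (i := n) (a := g⁻¹) (b := c))
      _ = c ^ (1 : ℤ) := by rw [hn', zpow_one]; group
  have h1 : m * n = 1 := hinj hnm
  have hgc : Commute g c := by
    rcases Int.eq_one_or_neg_one_of_mul_eq_one' h1 with ⟨hm1, hn1⟩ | ⟨hm1, hn1⟩
    · -- g * c * g⁻¹ = c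
      subst hn1
      rw [zpow_one] at hn'
      have : g * c = c * g := by
        have := hn'.symm
        calc g * c = (g * c * g⁻¹) * g := by group
          _ = c * g := by rw [this]
      exact this
    · -- g * c * g⁻¹ = c⁻¹
      subst hn1
      rw [zpow_neg_one] at hn'
      -- derive facts
      have hginv : g * c * g⁻¹ = c⁻¹ := hn'.symm
      have hgne : g ≠ 1 := by
        rintro rfl
        simp only [one_mul, inv_one, mul_one] at hginv
        have : c ^ (2 : ℕ) = 1 := by
          rw [pow_two]; nth_rewrite 2 [hginv]; group
        exact htf c hcne (isOfFinOrder_iff_pow_eq_one.mpr ⟨2, by norm_num, this⟩)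
      have hg2ne : g * g ≠ 1 := by
        intro hgg
        have : g ^ (2 : ℕ) = 1 := by rw [pow_two]; exact hgg
        exact htf g hgne (isOfFinOrder_iff_pow_eq_one.mpr ⟨2, by norm_num, this⟩)
      have hg2c : Commute (g * g) c := by
        have : (g * g) * c * (g * g)⁻¹ = c := by
          have step : (g * g) * c * (g * g)⁻¹ = g * (g * c * g⁻¹) * g⁻¹ := by group
          rw [step, hginv]
          calc g * c⁻¹ * g⁻¹ = (g * c * g⁻¹)⁻¹ := by group
            _ = (c⁻¹)⁻¹ := by rw [hginv]
            _ = c := inv_inv c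
        calc (g * g) * c = ((g * g) * c * (g * g)⁻¹) * (g * g) := by group
          _ = c * (g * g) := by rw [this]
      have hgmem : g ∈ Subgroup.centralizer {g * g} :=
        Subgroup.mem_centralizer_singleton_iff.mpr (by group)
      have hcmem : c ∈ Subgroup.centralizer {g * g} :=
        Subgroup.mem_centralizer_singleton_iff.mpr hg2c.symm.eq
      have hgc : Commute g c := aux_comm_of_cyclic (hΛ (g * g) hg2ne) hgmem hcmem
      -- contradiction: c = c⁻¹
      exfalso
      have hcc : c = c⁻¹ := by
        have : g * c * g⁻¹ = c := by
          calc g * c * g⁻¹ = c * g * g⁻¹ := by rw [hgc.eq]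
            _ = c := by group
        exact this.symm.trans hginv
      have : c ^ (2 : ℕ) = 1 := by rw [pow_two]; nth_rewrite 2 [hcc]; group
      exact htf c hcne (isOfFinOrder_iff_pow_eq_one.mpr ⟨2, by norm_num, this⟩)
  have : Commute g (c ^ j) := hgc.zpow_right j
  rwa [hja] at this

theorem stmt_4 {Λ : Type*} [Group Λ] (htf : ∀ g : Λ, g ≠ 1 → ¬IsOfFinOrder g)
    (hΛ : ∀ l : Λ, l ≠ 1 → IsCyclic (Subgroup.centralizer {l}))
    {Γ : Type*} [Group Γ] (K₁ K₂ : Subgroup Γ) (h₁ : K₁.Normal) (h₂ : K₂.Normal)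
    (hcomm : ∀ x ∈ K₁, ∀ y ∈ K₂, Commute x y)
    (φ : Γ →* Λ) (hnc : ¬ IsCyclic φ.range) :
    (∀ x ∈ K₁, φ x = 1) ∨ (∀ y ∈ K₂, φ y = 1) := by
  by_contra hcon
  push_neg at hcon
  obtain ⟨⟨x₀, hx₀, ha⟩, ⟨y₀, hy₀, hb⟩⟩ := hcon
  set a := φ x₀ with ha_def
  set b := φ y₀ with hb_def
  have hab : Commute a b := (hcomm x₀ hx₀ y₀ hy₀).map φ
  apply hnc
  have key : ∀ t : Γ, Commute (φ t) a := by
    intro t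
    have hx' : t * x₀ * t⁻¹ ∈ K₁ := h₁.conj_mem x₀ hx₀ t
    have hcm : Commute (φ t * a * (φ t)⁻¹) b := by
      have := (hcomm _ hx' y₀ hy₀).map φ
      simpa [map_mul, map_inv] using this
    have hne : φ t * a * (φ t)⁻¹ ≠ 1 := by
      intro h1
      exact ha (by simpa using (conj_eq_one_iff (a := φ t) (b := a)).mp h1)
    have hCC : Subgroup.centralizer {φ t * a * (φ t)⁻¹} = Subgroup.centralizer {a} := by
      rw [aux_centralizer_eq hΛ hne hb hcm, aux_centralizer_eq hΛ hb ha hab.symm]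
    have hmem : a ∈ Subgroup.centralizer {φ t * a * (φ t)⁻¹} := by
      rw [hCC]; exact Subgroup.mem_centralizer_singleton_iff.mpr rfl
    have hcomm2 : Commute (φ t * a * (φ t)⁻¹) a :=
      (Subgroup.mem_centralizer_singleton_iff.mp hmem).symm
    exact aux_norm htf hΛ ha hcomm2
  have hle : φ.range ≤ Subgroup.centralizer {a} := by
    rintro x ⟨t, rfl⟩
    exact Subgroup.mem_centralizer_singleton_iff.mpr (key t).eq
  have hane : a ≠ 1 := ha
  letI : IsCyclic (Subgroup.centralizer {a}) := hΛ a hane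
  have hcyc : IsCyclic (φ.range.subgroupOf (Subgroup.centralizer {a})) :=
    Subgroup.isCyclic _
  exact isCyclic_of_surjective (Subgroup.subgroupOfEquivOfLe hle)
    (Subgroup.subgroupOfEquivOfLe hle).surjective
end

section
/- Let Λ be a torsion-free group in which the centralizer of every nontrivial element is cyclic, let Γ be a group and K ≤ Γ a finite index subgroup. If φ: Γ → Λ is a homomorphism with φ(K) cyclic, then φ(Γ) is cyclic. -/
/-- The Mathlib (Dec 2024) definition, removed since: a monoid is torsion-free if no
nontrivial element has finite order. -/
def Monoid.IsTorsionFree (G : Type*) [Monoid G] : Prop :=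
  ∀ g : G, g ≠ 1 → ¬IsOfFinOrder g

private lemma cyclic_of_le {Λ : Type*} [Group Λ] {H C : Subgroup Λ} (hle : H ≤ C)
    (hC : IsCyclic C) : IsCyclic H :=
  isCyclic_of_surjective (Subgroup.subgroupOfEquivOfLe hle)
    (Subgroup.subgroupOfEquivOfLe hle).surjective

theorem stmt_5 {Λ : Type*} [Group Λ] (htf : Monoid.IsTorsionFree Λ)
    (hΛ : ∀ l : Λ, l ≠ 1 → IsCyclic (Subgroup.centralizer {l}))
    {Γ : Type*} [Group Γ] (K : Subgroup Γ) (hfi : K.FiniteIndex)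
    (φ : Γ →* Λ) (hK : IsCyclic (K.map φ)) : IsCyclic φ.range := by
  -- uniform exponent N with x^N ∈ K for all x
  set M := K.normalCore with hM
  have hMfi : M.FiniteIndex := Subgroup.finiteIndex_normalCore K
  set N := M.index with hN
  have hNne : N ≠ 0 := hMfi.index_ne_zero
  have hpow : ∀ x : Γ, x ^ N ∈ K := fun x =>
    K.normalCore_le (M.pow_index_mem x)
  -- torsion-free: a^N = 1 → a = 1
  have hcancel : ∀ a : Λ, a ^ N = 1 → a = 1 := by
    intro a ha
    by_contra h1
    exact htf a h1 (isOfFinOrder_iff_pow_eq_one.mpr ⟨N, Nat.pos_of_ne_zero hNne, ha⟩)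
  -- generator of φ(K)
  obtain ⟨g, hg⟩ := hK.exists_generator
  have hgen : ∀ y ∈ K.map φ, ∃ m : ℤ, (g : Λ) ^ m = y := by
    intro y hy
    obtain ⟨m, hm⟩ := hg ⟨y, hy⟩
    exact ⟨m, by simpa using congrArg Subtype.val hm⟩
  have hmem : ∀ x : Γ, φ x ^ N ∈ K.map φ := fun x =>
    ⟨x ^ N, hpow x, by simp⟩
  by_cases hg1 : (g : Λ) = 1
  · -- φ(K) trivial, so range trivial
    have : φ.range ≤ Subgroup.zpowers (1 : Λ) := by
      rintro a ⟨x, rfl⟩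
      obtain ⟨m, hm⟩ := hgen _ (hmem x)
      rw [hg1, one_zpow] at hm
      have : φ x = 1 := hcancel _ hm.symm
      simp [this]
    rw [Subgroup.zpowers_one_eq_bot] at this
    exact cyclic_of_le this isCyclic_of_subsingleton
  · -- show range ≤ centralizer of g
    have hle : φ.range ≤ Subgroup.centralizer {(g : Λ)} := by
      rintro a ⟨x, rfl⟩
      set b := φ x with hb
      rw [Subgroup.mem_centralizer_singleton_iff]
      by_cases hb1 : b = 1
      · simp [hb1]
      obtain ⟨m, hm⟩ := hgen _ (hmem x)
      have hmne : m ≠ 0 := by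
        rintro rfl
        exact hb1 (hcancel _ (by simpa using hm.symm))
      have hgm1 : (g : Λ) ^ m ≠ 1 := by
        intro h
        apply hg1
        by_contra hgg
        exact htf _ hgg (isOfFinOrder_iff_zpow_eq_one.mpr ⟨m, hmne, h⟩)
      obtain ⟨c, hc⟩ := (hΛ _ hgm1).exists_generator
      have hbC : b ∈ Subgroup.centralizer {(g : Λ) ^ m} := by
        rw [Subgroup.mem_centralizer_singleton_iff, hm]
        exact ((Commute.refl b).pow_right N).eq
      have hgC : (g : Λ) ∈ Subgroup.centralizer {(g : Λ) ^ m} := by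
        rw [Subgroup.mem_centralizer_singleton_iff]
        exact ((Commute.refl ((g : Λ))).zpow_right m).eq
      obtain ⟨i, hi⟩ := hc ⟨b, hbC⟩
      obtain ⟨j, hj⟩ := hc ⟨(g : Λ), hgC⟩
      have hi' : (c : Λ) ^ i = b := by simpa using congrArg Subtype.val hi
      have hj' : (c : Λ) ^ j = (g : Λ) := by simpa using congrArg Subtype.val hj
      have hcomm : (c : Λ) ^ j * (c : Λ) ^ i = (c : Λ) ^ i * (c : Λ) ^ j := by
        rw [← zpow_add, ← zpow_add, add_comm]
      rw [hi', hj'] at hcomm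
      exact hcomm.symm
    exact cyclic_of_le hle (hΛ _ hg1)
end

section
/- Let G₁, ..., G_n be groups, and let Γ ≤ G₁ × ... × G_n be a finite index subgroup with each projection π_i: Γ → G_i surjective. Let Λ be a torsion-free group in which centralizers of nontrivial elements are cyclic. Then any homomorphism φ: Γ → Λ either has cyclic image or factors through π_i for some i. -/
private lemma pi_eq_noncommProd {I : Type*} [Fintype I] [DecidableEq I] {G : I → Type*}
    [∀ i, Group (G i)] (x : ∀ i, G i) :
    Finset.univ.noncommProd (fun i => Pi.mulSingle i (x i))
      (fun i _ j _ _ => Pi.mulSingle_apply_commute x i j) = x := by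
  ext k
  have h := Finset.map_noncommProd Finset.univ (fun i => Pi.mulSingle i (x i))
      (fun i _ j _ _ => Pi.mulSingle_apply_commute x i j) (Pi.evalMonoidHom G k)
  simp only [Pi.evalMonoidHom_apply] at h
  rw [h]
  rw [← Finset.insert_erase (Finset.mem_univ k),
    Finset.noncommProd_insert_of_notMem _ _ _ _ (Finset.notMem_erase k _),
    Pi.mulSingle_eq_same]
  rw [Finset.noncommProd_eq_pow_card _ _ _ 1 ?_, one_pow, mul_one]
  intro j hj
  rw [Finset.mem_erase] at hj
  exact Pi.mulSingle_eq_of_ne hj.1.symm _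

private lemma phi_pow_decomp {I : Type*} [Fintype I] [DecidableEq I] {G : I → Type*}
    [∀ i, Group (G i)] {Γ : Subgroup (∀ i, G i)} {Λ : Type*} [Group Λ] (φ : ↥Γ →* Λ)
    (γ : ↥Γ) (e : ℕ) (hmem : ∀ j : I, Pi.mulSingle j (((γ : ∀ i, G i) ^ e) j) ∈ Γ) :
    (∀ z : Λ, (∀ (j : I) (x : ↥Γ),
        (x : ∀ i, G i) = Pi.mulSingle j (((γ : ∀ i, G i) ^ e) j) → Commute z (φ x)) →
      Commute z (φ γ ^ e)) ∧
    ((∀ (j : I) (x : ↥Γ),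
        (x : ∀ i, G i) = Pi.mulSingle j (((γ : ∀ i, G i) ^ e) j) → φ x = 1) →
      φ γ ^ e = 1) := by
  set y : ∀ i, G i := (γ : ∀ i, G i) ^ e with hy
  set t : I → ↥Γ := fun j => ⟨Pi.mulSingle j (y j), hmem j⟩ with ht
  have hcoe : ∀ j, (t j : ∀ i, G i) = Pi.mulSingle j (y j) := fun j => rfl
  have tcomm : ∀ l m : I, Commute (t l) (t m) := fun l m =>
    Subtype.ext (Pi.mulSingle_apply_commute y l m)
  have hprod : γ ^ e = Finset.univ.noncommProd t (fun l _ m _ _ => tcomm l m) := by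
    apply Subtype.coe_injective
    calc ((γ ^ e : ↥Γ) : ∀ i, G i) = y := SubmonoidClass.coe_pow γ e
      _ = Finset.univ.noncommProd (fun i => Pi.mulSingle i (y i))
          (fun i _ j _ _ => Pi.mulSingle_apply_commute y i j) := (pi_eq_noncommProd y).symm
      _ = ((Finset.univ.noncommProd t (fun l _ m _ _ => tcomm l m) : ↥Γ) : ∀ i, G i) :=
          (Finset.map_noncommProd Finset.univ t (fun l _ m _ _ => tcomm l m) Γ.subtype).symm
  have hphi : φ γ ^ e = Finset.univ.noncommProd (fun j => φ (t j))
      (fun l _ m _ _ => (tcomm l m).map φ) := by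
    rw [← map_pow, hprod]
    exact Finset.map_noncommProd _ _ _ φ
  constructor
  · intro z hz
    rw [hphi]
    exact Finset.noncommProd_commute _ _ _ _ (fun j _ => hz j (t j) rfl)
  · intro h1
    rw [hphi]
    exact (Finset.noncommProd_eq_pow_card _ _ _ 1 (fun j _ => h1 j (t j) rfl)).trans (one_pow _)

theorem stmt_6 {n : ℕ} {G : Fin n → Type*} [∀ i, Group (G i)]
    (Γ : Subgroup (∀ i, G i)) (hfi : Γ.FiniteIndex)
    (hsurj : ∀ i, ∀ x : G i, ∃ γ ∈ Γ, γ i = x)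
    {Λ : Type*} [Group Λ] (htf : ∀ g : Λ, g ≠ 1 → ¬IsOfFinOrder g)
    (hΛ : ∀ l : Λ, l ≠ 1 → IsCyclic (Subgroup.centralizer {l}))
    (φ : ↥Γ →* Λ) :
    IsCyclic φ.range ∨
      ∃ i, ∃ ψ : G i →* Λ, ∀ γ : ↥Γ, φ γ = ψ ((γ : ∀ i, G i) i) := by
  classical
  -- commutation transitivity
  have hct : ∀ {a b c : Λ}, b ≠ 1 → Commute a b → Commute b c → Commute a c := by
    intro a b c hb h1 h2
    have := hΛ b hb
    letI : CommGroup (Subgroup.centralizer ({b} : Set Λ)) := IsCyclic.commGroup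
    have ha : a ∈ Subgroup.centralizer ({b} : Set Λ) := by
      rw [Subgroup.mem_centralizer_iff]
      rintro g (rfl : g = b)
      exact h1.eq.symm
    have hc : c ∈ Subgroup.centralizer ({b} : Set Λ) := by
      rw [Subgroup.mem_centralizer_iff]
      rintro g (rfl : g = b)
      exact h2.eq
    exact congrArg Subtype.val
      (mul_comm (⟨a, ha⟩ : Subgroup.centralizer ({b} : Set Λ)) ⟨c, hc⟩)
  have htf' : ∀ {l : Λ} {d : ℕ}, 0 < d → l ^ d = 1 → l = 1 := by
    intro l d hd h
    by_contra hl
    exact htf l hl (isOfFinOrder_iff_pow_eq_one.mpr ⟨d, hd, h⟩)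
  set e : ℕ := Nat.factorial Γ.index with he
  have hepos : 0 < e := Nat.factorial_pos _
  have hmem : ∀ a : (∀ i, G i), a ^ e ∈ Γ := fun a =>
    Subgroup.pow_mem_of_index_ne_zero_of_dvd hfi.index_ne_zero a
      (fun m hm hle => Nat.dvd_factorial hm hle)
  have hslice : ∀ (γ : ↥Γ) (j : Fin n), Pi.mulSingle j (((γ : ∀ i, G i) ^ e) j) ∈ Γ := by
    intro γ j
    have h1 : ((γ : ∀ i, G i) ^ e) j = ((γ : ∀ i, G i) j) ^ e := rfl
    rw [h1, Pi.mulSingle_pow]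
    exact hmem _
  by_cases hAB : ∃ i j : Fin n, i ≠ j ∧
      (∃ a : ↥Γ, (∀ l, l ≠ i → (a : ∀ i, G i) l = 1) ∧ φ a ≠ 1) ∧
      (∃ b : ↥Γ, (∀ l, l ≠ j → (b : ∀ i, G i) l = 1) ∧ φ b ≠ 1)
  · -- two "independent" nontrivial directions: image is cyclic
    left
    obtain ⟨i, j, hij, ⟨a, ha, haφ⟩, ⟨b, hb, hbφ⟩⟩ := hAB
    have hacoe : (a : ∀ i, G i) = Pi.mulSingle i ((a : ∀ i, G i) i) := by
      funext l
      rcases eq_or_ne l i with rfl | hl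
      · rw [Pi.mulSingle_eq_same]
      · rw [ha l hl, Pi.mulSingle_eq_of_ne hl]
    have hbcoe : (b : ∀ i, G i) = Pi.mulSingle j ((b : ∀ i, G i) j) := by
      funext l
      rcases eq_or_ne l j with rfl | hl
      · rw [Pi.mulSingle_eq_same]
      · rw [hb l hl, Pi.mulSingle_eq_of_ne hl]
    have hzw : Commute (φ a) (φ b) := by
      refine Commute.map (Subtype.ext ?_) φ
      show (a : ∀ i, G i) * b = (b : ∀ i, G i) * a
      rw [hacoe, hbcoe]
      exact Pi.mulSingle_commute hij _ _
    have hmain : ∀ γ : ↥Γ, Commute (φ a) (φ γ) := by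
      intro γ
      rcases eq_or_ne (φ γ) 1 with h1 | h1
      · rw [h1]; exact Commute.one_right _
      have hγd : φ γ ^ e ≠ 1 := fun h => h1 (htf' hepos h)
      have hcom : Commute (φ a) (φ γ ^ e) := by
        refine (phi_pow_decomp φ γ e (hslice γ)).1 (φ a) ?_
        intro l x hx
        rcases eq_or_ne l j with rfl | hl
        ·
          -- x supported at l = j, a is at i ≠ j: they commute directly
          have h2' : Commute x a := by
            refine Subtype.ext ?_
            show (x : ∀ i, G i) * a = (a : ∀ i, G i) * x
            rw [hx, hacoe]
            exact Pi.mulSingle_commute (Ne.symm hij) _ _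
          exact (h2'.map φ).symm
        rcases eq_or_ne l i with rfl | hl2
        · -- x supported at i: use b as middleman
          have h1' : Commute x b := by
            refine Subtype.ext ?_
            show (x : ∀ i, G i) * b = (b : ∀ i, G i) * x
            rw [hx, hbcoe]
            exact Pi.mulSingle_commute hl _ _
          exact hct hbφ hzw (h1'.map φ).symm
        · have h2' : Commute x a := by
            refine Subtype.ext ?_
            show (x : ∀ i, G i) * a = (a : ∀ i, G i) * x
            rw [hx, hacoe]
            exact Pi.mulSingle_commute hl2 _ _
          exact (h2'.map φ).symm
      exact hct hγd hcom ((Commute.refl (φ γ)).pow_left e)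
    have hle : φ.range ≤ Subgroup.centralizer {φ a} := by
      rintro y ⟨γ, rfl⟩
      rw [Subgroup.mem_centralizer_iff]
      rintro g (rfl : g = φ a)
      exact (hmain γ).eq
    haveI := hΛ (φ a) haφ
    exact Subgroup.isCyclic_of_le hle
  · -- at most one nontrivial direction
    rcases Nat.eq_zero_or_pos n with hn | hn
    · left
      subst hn
      haveI : Subsingleton (∀ i : Fin 0, G i) := ⟨fun a b => funext fun i => i.elim0⟩
      haveI : Subsingleton ↥Γ := ⟨fun a b => Subtype.ext (Subsingleton.elim _ _)⟩
      haveI : Subsingleton φ.range := by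
        constructor
        rintro ⟨y, γ, rfl⟩ ⟨y', γ', rfl⟩
        exact Subtype.ext (congrArg φ (Subsingleton.elim γ γ'))
      exact isCyclic_of_subsingleton
    obtain ⟨i₀, htriv⟩ : ∃ i₀ : Fin n, ∀ j, j ≠ i₀ → ∀ x : ↥Γ,
        (∀ l, l ≠ j → (x : ∀ i, G i) l = 1) → φ x = 1 := by
      by_cases hex : ∃ i : Fin n, ∃ a : ↥Γ,
          (∀ l, l ≠ i → (a : ∀ i, G i) l = 1) ∧ φ a ≠ 1
      · obtain ⟨i₀, hbad⟩ := hex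
        refine ⟨i₀, fun j hj x hx => ?_⟩
        by_contra hxne
        exact hAB ⟨i₀, j, Ne.symm hj, hbad, ⟨x, hx, hxne⟩⟩
      · push_neg at hex
        refine ⟨⟨0, hn⟩, fun j _ x hx => ?_⟩
        exact hex j x hx
    -- the kernel of the i₀ coordinate is killed by φ
    have hker : ∀ x : ↥Γ, (x : ∀ i, G i) i₀ = 1 → φ x = 1 := by
      intro x hx
      refine htf' hepos ((phi_pow_decomp φ x e (hslice x)).2 ?_)
      intro l u hu
      rcases eq_or_ne l i₀ with rfl | hl
      · have hu1 : u = 1 := by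
          refine Subtype.ext ?_
          show (u : ∀ i, G i) = 1
          rw [hu]
          have h2 : ((x : ∀ i, G i) ^ e) l = 1 := by
            show ((x : ∀ i, G i) l) ^ e = 1
            rw [hx, one_pow]
          rw [h2, Pi.mulSingle_one]
        rw [hu1, map_one]
      · refine htriv l hl u ?_
        intro m hm
        rw [hu]
        exact Pi.mulSingle_eq_of_ne hm _
    have hcong : ∀ x y : ↥Γ, (x : ∀ i, G i) i₀ = (y : ∀ i, G i) i₀ → φ x = φ y := by
      intro x y hxy
      have h1 : φ (x * y⁻¹) = 1 := by
        refine hker _ ?_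
        show ((x : ∀ i, G i) * (y : ∀ i, G i)⁻¹) i₀ = 1
        rw [Pi.mul_apply, Pi.inv_apply, hxy, mul_inv_cancel]
      rw [map_mul, map_inv] at h1
      exact (mul_inv_eq_one.mp h1)
    choose sec hsec hsecval using hsurj i₀
    refine Or.inr ⟨i₀, ⟨⟨fun g => φ ⟨sec g, hsec g⟩, ?_⟩, ?_⟩, ?_⟩
    · exact hker _ (hsecval 1)
    · intro g h
      refine (hcong _ (⟨sec g, hsec g⟩ * ⟨sec h, hsec h⟩) ?_).trans (map_mul φ _ _)
      show sec (g * h) i₀ = (sec g * sec h) i₀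
      rw [hsecval, Pi.mul_apply, hsecval, hsecval]
    · intro γ
      exact hcong γ ⟨sec ((γ : ∀ i, G i) i₀), hsec _⟩ (hsecval _).symm
end

section
/- Let G₁, G₂ be groups and Γ ≤ G₁ × G₂ a finite index subgroup surjecting onto each factor. Set K₁ = Γ ∩ (G₁ × 1) and K₂ = Γ ∩ (1 × G₂). Then K₁ × K₂ (identified with its image in G₁ × G₂) is a finite index subgroup of Γ. -/
theorem stmt_7 {G₁ G₂ : Type*} [Group G₁] [Group G₂]
    (Γ : Subgroup (G₁ × G₂)) (hfi : Γ.FiniteIndex)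
    (hsurj₁ : ∀ x : G₁, ∃ γ ∈ Γ, γ.1 = x) (hsurj₂ : ∀ y : G₂, ∃ γ ∈ Γ, γ.2 = y) :
    (((Γ ⊓ (⊤ : Subgroup G₁).prod (⊥ : Subgroup G₂)) ⊔
      (Γ ⊓ (⊥ : Subgroup G₁).prod (⊤ : Subgroup G₂))).relIndex Γ) ≠ 0 := by
  haveI := hfi
  set M₁ : Subgroup G₁ := Γ.comap (MonoidHom.inl G₁ G₂) with hM₁
  set M₂ : Subgroup G₂ := Γ.comap (MonoidHom.inr G₁ G₂) with hM₂
  have h1 : Γ ⊓ (⊤ : Subgroup G₁).prod (⊥ : Subgroup G₂) = M₁.prod ⊥ := by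
    ext ⟨x, y⟩
    simp only [Subgroup.mem_inf, Subgroup.mem_prod, Subgroup.mem_top, Subgroup.mem_bot,
      true_and, and_true, Subgroup.mem_comap, hM₁]
    constructor
    · rintro ⟨h, rfl⟩; exact ⟨h, rfl⟩
    · rintro ⟨h, rfl⟩; exact ⟨h, rfl⟩
  have h2 : Γ ⊓ (⊥ : Subgroup G₁).prod (⊤ : Subgroup G₂) = (⊥ : Subgroup G₁).prod M₂ := by
    ext ⟨x, y⟩
    simp only [Subgroup.mem_inf, Subgroup.mem_prod, Subgroup.mem_top, Subgroup.mem_bot,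
      true_and, and_true, Subgroup.mem_comap, hM₂]
    constructor
    · rintro ⟨h, rfl⟩; exact ⟨rfl, h⟩
    · rintro ⟨rfl, h⟩; exact ⟨h, rfl⟩
  have h3 : M₁.prod (⊥ : Subgroup G₂) ⊔ (⊥ : Subgroup G₁).prod M₂ = M₁.prod M₂ := by
    apply le_antisymm
    · exact sup_le (Subgroup.prod_mono le_rfl bot_le) (Subgroup.prod_mono bot_le le_rfl)
    · rintro ⟨x, y⟩ ⟨hx, hy⟩
      have : (x, y) = (x, 1) * (1, y) := by simp
      rw [this]
      exact mul_mem (Subgroup.mem_sup_left ⟨hx, rfl⟩) (Subgroup.mem_sup_right ⟨rfl, hy⟩)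
  rw [h1, h2, h3]
  have hle : M₁.prod M₂ ≤ Γ := by
    rw [← h3, ← h1, ← h2]
    exact sup_le inf_le_left inf_le_left
  have hM₁i : M₁.index ≠ 0 := by
    rw [Subgroup.index_comap]
    exact (Subgroup.instFiniteIndex_subgroupOf Γ _).index_ne_zero
  have hM₂i : M₂.index ≠ 0 := by
    rw [Subgroup.index_comap]
    exact (Subgroup.instFiniteIndex_subgroupOf Γ _).index_ne_zero
  have hidx : (M₁.prod M₂).index ≠ 0 := by
    rw [Subgroup.index_prod]
    exact Nat.mul_ne_zero hM₁i hM₂i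
  intro h
  exact hidx (Nat.eq_zero_of_zero_dvd (h ▸ Subgroup.relIndex_dvd_index_of_le hle))
end

section
/- Let Λ be a torsion-free group with all centralizers of nontrivial elements cyclic, let G be a group with elements T₁₂, T₂₃, T₁₃, T₁₂₃ satisfying T₁₂T₂₃T₁₃ = T₁₂₃ with T₁₂₃ commuting with both T₁₂ and T₂₃, and let φ: G → Λ be a homomorphism such that φ(T₁₂) and φ(T₂₃) do not commute. Then φ(T₁₂₃) = 1 and φ(T₁₃) = φ(T₂₃)⁻¹φ(T₁₂)⁻¹. -/
theorem stmt_9 {Λ : Type*} [Group Λ] (htf : ∀ g : Λ, g ≠ 1 → ¬IsOfFinOrder g)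
    (hΛ : ∀ l : Λ, l ≠ 1 → IsCyclic (Subgroup.centralizer {l}))
    {G : Type*} [Group G] (T₁₂ T₂₃ T₁₃ T₁₂₃ : G)
    (hrel : T₁₂ * T₂₃ * T₁₃ = T₁₂₃)
    (hc₁ : Commute T₁₂₃ T₁₂) (hc₂ : Commute T₁₂₃ T₂₃)
    (φ : G →* Λ) (hnc : ¬ Commute (φ T₁₂) (φ T₂₃)) :
    φ T₁₂₃ = 1 ∧ φ T₁₃ = (φ T₂₃)⁻¹ * (φ T₁₂)⁻¹ := by
  have h1 : φ T₁₂₃ = 1 := by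
    by_contra h
    have hcyc := hΛ (φ T₁₂₃) h
    have ha : φ T₁₂ ∈ Subgroup.centralizer {φ T₁₂₃} := by
      rw [Subgroup.mem_centralizer_iff]
      rintro g rfl
      exact hc₁.map φ
    have hb : φ T₂₃ ∈ Subgroup.centralizer {φ T₁₂₃} := by
      rw [Subgroup.mem_centralizer_iff]
      rintro g rfl
      exact hc₂.map φ
    letI := hcyc.commGroup
    have : (⟨φ T₁₂, ha⟩ : Subgroup.centralizer {φ T₁₂₃}) * ⟨φ T₂₃, hb⟩
        = ⟨φ T₂₃, hb⟩ * ⟨φ T₁₂, ha⟩ := mul_comm _ _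
    exact hnc (congrArg Subtype.val this)
  refine ⟨h1, ?_⟩
  have := congrArg φ hrel
  simp only [map_mul, h1] at this
  rw [← mul_inv_rev]
  exact eq_inv_of_mul_eq_one_right this
end

section
/- Let 1 → ℤ → G →p→ Q → 1 be a central extension and let H ≤ G be a finite index subgroup containing the central ℤ. If a generator α of the central ℤ has a nonzero power lying in the commutator subgroup of H, then every homomorphism from H to a torsion-free group with cyclic centralizers of nontrivial elements kills α, hence factors through p restricted to H. -/
theorem stmt_14 {G : Type*} [Group G] (α : G) (hα : α ∈ Subgroup.center G)
    (hord : ¬ IsOfFinOrder α) (H : Subgroup G) (hfi : H.FiniteIndex)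
    (hαH : α ∈ H) (n : ℤ) (hn : n ≠ 0) (hcomm : α ^ n ∈ ⁅H, H⁆)
    {Λ : Type*} [Group Λ] (htf : Monoid.IsTorsionFree Λ)
    (hΛ : ∀ l : Λ, l ≠ 1 → IsCyclic (Subgroup.centralizer {l}))
    (φ : ↥H →* Λ) :
    φ ⟨α, hαH⟩ = 1 ∧
      ∀ h₁ h₂ : ↥H, (h₁ : G) * (h₂ : G)⁻¹ ∈ Subgroup.zpowers α → φ h₁ = φ h₂ := by
  have key : φ ⟨α, hαH⟩ = 1 := by
    by_contra h1
    have hc := hΛ _ h1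
    -- range of φ lies in the centralizer of φ α, since α is central in G
    have hle : ∀ x : ↥H, φ x ∈ Subgroup.centralizer {φ ⟨α, hαH⟩} := by
      intro x
      rw [Subgroup.mem_centralizer_singleton_iff]
      rw [← map_mul, ← map_mul]
      congr 1
      ext
      push_cast
      exact Subgroup.mem_center_iff.mp hα x
    -- the centralizer is cyclic, hence abelian, so φ kills commutators
    letI := hc.commGroup
    have habel : ∀ x y : ↥H, φ x * φ y = φ y * φ x := by
      intro x y
      have := mul_comm (⟨φ x, hle x⟩ : Subgroup.centralizer {φ ⟨α, hαH⟩})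
        ⟨φ y, hle y⟩
      simpa [Subtype.ext_iff] using this
    open scoped commutatorElement in
    have hker : ⁅H, H⁆ ≤ Subgroup.map H.subtype φ.ker := by
      rw [Subgroup.commutator_le]
      intro g hg k hk
      refine ⟨⁅(⟨g, hg⟩ : ↥H), ⟨k, hk⟩⁆, ?_, rfl⟩
      have : φ ⁅(⟨g, hg⟩ : ↥H), ⟨k, hk⟩⁆ = ⁅φ ⟨g, hg⟩, φ ⟨k, hk⟩⁆ :=
        map_commutatorElement φ _ _
      simp only [SetLike.mem_coe]
      rw [MonoidHom.mem_ker, this, commutatorElement_def,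
        mul_inv_eq_one, mul_inv_eq_iff_eq_mul]
      simpa using habel ⟨g, hg⟩ ⟨k, hk⟩
    obtain ⟨x, hx, hxe⟩ := hker hcomm
    have hxeq : x = (⟨α, hαH⟩ : ↥H) ^ n := by
      ext
      simpa using hxe
    have hpow : φ ⟨α, hαH⟩ ^ n = 1 := by
      rw [← map_zpow, ← hxeq]; exact hx
    exact htf _ h1 (isOfFinOrder_iff_zpow_eq_one.mpr ⟨n, hn, hpow⟩)
  refine ⟨key, ?_⟩
  rintro h₁ h₂ ⟨k, hk⟩
  have : h₁ = (⟨α, hαH⟩ : ↥H) ^ k * h₂ := by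
    have hk' : α ^ k = (h₁ : G) * (h₂ : G)⁻¹ := hk
    ext
    push_cast
    rw [hk']
    group
  rw [this, map_mul, map_zpow, key, one_zpow, one_mul]
end

section
/- Let Λ be a torsion-free group in which centralizers of nontrivial elements are cyclic and let φ: F₂ × ℤ → Λ be a homomorphism whose image is not cyclic. Then φ is trivial on the ℤ factor and factors through the projection F₂ × ℤ → F₂. -/
theorem stmt_17 {Λ : Type*} [Group Λ] (htf : Monoid.IsTorsionFree Λ)
    (hΛ : ∀ l : Λ, l ≠ 1 → IsCyclic (Subgroup.centralizer {l}))
    (φ : FreeGroup (Fin 2) × Multiplicative ℤ →* Λ)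
    (hnc : ¬ IsCyclic φ.range) :
    (∀ z : Multiplicative ℤ, φ (1, z) = 1) ∧
      ∃ ψ : FreeGroup (Fin 2) →* Λ,
        φ = ψ.comp (MonoidHom.fst (FreeGroup (Fin 2)) (Multiplicative ℤ)) := by
  have key : ∀ z : Multiplicative ℤ, φ (1, z) = 1 := by
    intro z
    by_contra h
    apply hnc
    have hle : φ.range ≤ Subgroup.centralizer {φ (1, z)} := by
      rintro _ ⟨⟨a, b⟩, rfl⟩
      rw [Subgroup.mem_centralizer_iff]
      rintro y hy
      rw [Set.mem_singleton_iff] at hy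
      subst hy
      rw [← map_mul, ← map_mul, Prod.mk_mul_mk, Prod.mk_mul_mk]
      simp [mul_comm z b]
    haveI := hΛ _ h
    have e := Subgroup.subgroupOfEquivOfLe hle
    exact isCyclic_of_surjective e.toMonoidHom e.surjective
  refine ⟨key, φ.comp (MonoidHom.inl _ _), ?_⟩
  ext ⟨a, b⟩
  have : (a, b) = (a, (1 : Multiplicative ℤ)) * (1, b) := by
    simp [Prod.mk_mul_mk]
  show φ (a, b) = φ (a, 1)
  rw [this, map_mul, key b, mul_one]
end
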